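/- Let G be a group satisfying the minimal condition on centralizers. Then the centralizer-connected component G^{cc}, defined as the intersection of all centralizers of finite index in G, equals a finite intersection of such centralizers and has finite index in G. -/

import Mathlib

open Subgroup

private lemma centralizer_iUnion_eq {G : Type*} [Group G] {ι : Sort*} (As : ι → Set G) :
    Subgroup.centralizer (⋃ i, As i) = ⨅ i, Subgroup.centralizer (As i) := by
  ext x
  simp [Subgroup.mem_centralizer_iff, Subgroup.mem_iInf, Set.mem_iUnion]
  aesop

theorem stmt_11 {G : Type*} [Group G]
    (hmc : ¬ ∃ f : ℕ → Set G, StrictAnti fun n => Subgroup.centralizer (f n)) :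
    ∃ (n : ℕ) (As : Fin n → Set G),
      (∀ i, (Subgroup.centralizer (As i)).FiniteIndex) ∧
      (⨅ (A : Set G) (_ : (Subgroup.centralizer A).FiniteIndex),
          Subgroup.centralizer A) = ⨅ i, Subgroup.centralizer (As i) ∧
      (⨅ (A : Set G) (_ : (Subgroup.centralizer A).FiniteIndex),
          Subgroup.centralizer A).FiniteIndex := by
  classical
  set S : Set (Subgroup G) := {H | ∃ (n : ℕ) (As : Fin n → Set G),
      (∀ i, (Subgroup.centralizer (As i)).FiniteIndex) ∧
      H = ⨅ i, Subgroup.centralizer (As i)} with hS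
  have htop : (⊤ : Subgroup G) ∈ S := ⟨0, Fin.elim0, fun i => i.elim0, (iInf_of_empty _).symm⟩
  -- every element of S is a centralizer of finite index
  have hcent : ∀ H ∈ S, ∃ A : Set G, H = Subgroup.centralizer A :=
    fun H ⟨n, As, _, hH⟩ => ⟨⋃ i, As i, by rw [hH, centralizer_iUnion_eq]⟩
  have hfin : ∀ H ∈ S, H.FiniteIndex := by
    rintro H ⟨n, As, hAs, rfl⟩
    exact Subgroup.finiteIndex_iInf hAs
  -- S has a minimal element
  have hmin : ∃ M ∈ S, ∀ N ∈ S, ¬ N < M := by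
    by_contra h
    push_neg at h
    have step : ∀ H ∈ S, ∃ N ∈ S, N < H := by
      intro H hH
      obtain ⟨N, hN, hlt⟩ := h H hH
      exact ⟨N, hN, hlt⟩
    let g : ℕ → {H // H ∈ S} := fun n => Nat.rec ⟨⊤, htop⟩
      (fun _ p => ⟨(step p.1 p.2).choose, (step p.1 p.2).choose_spec.1⟩) n
    have hglt : ∀ n, (g (n+1)).1 < (g n).1 := fun n =>
      (step (g n).1 (g n).2).choose_spec.2
    choose A hA using fun n => hcent (g n).1 (g n).2
    refine hmc ⟨A, strictAnti_nat_of_succ_lt fun n => ?_⟩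
    simp only [← hA]
    exact hglt n
  obtain ⟨M, hMS, hMmin⟩ := hmin
  obtain ⟨n, As, hAs, hMeq⟩ := hMS
  -- M is below every finite-index centralizer
  have hle : ∀ (A : Set G), (Subgroup.centralizer A).FiniteIndex →
      M ≤ Subgroup.centralizer A := by
    intro A hA
    have hmem : Subgroup.centralizer A ⊓ M ∈ S := by
      set As' : Fin (n+1) → Set G := Fin.cons A As with hAs'
      refine ⟨n + 1, As', ?_, ?_⟩
      · intro i
        induction i using Fin.cases with
        | zero => simpa [hAs'] using hA
        | succ i => simpa [hAs'] using hAs i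
      · rw [hMeq]
        apply le_antisymm
        · refine le_iInf fun i => ?_
          induction i using Fin.cases with
          | zero => simp only [hAs', Fin.cons_zero]; exact (inf_le_left : Subgroup.centralizer A ⊓ _ ≤ _)
          | succ i => simp only [hAs', Fin.cons_succ]; exact (inf_le_right.trans (iInf_le (fun j : Fin n => Subgroup.centralizer (As j)) i))
        · refine le_inf ?_ (le_iInf fun i => ?_)
          · have h := iInf_le (fun j : Fin (n+1) => Subgroup.centralizer (As' j)) 0
            simpa [hAs'] using h
          · have h := iInf_le (fun j : Fin (n+1) => Subgroup.centralizer (As' j)) i.succ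
            simpa [hAs'] using h
    have : ¬ (Subgroup.centralizer A ⊓ M < M) := hMmin _ hmem
    have h2 : Subgroup.centralizer A ⊓ M ≤ M := inf_le_right
    have := lt_of_le_of_ne h2
    rcases eq_or_lt_of_le h2 with heq | hlt
    · exact heq ▸ inf_le_left
    · exact absurd hlt (hMmin _ hmem)
  have key : (⨅ (A : Set G) (_ : (Subgroup.centralizer A).FiniteIndex),
      Subgroup.centralizer A) = M := by
    apply le_antisymm
    · rw [hMeq]
      exact le_iInf fun i => iInf_le_of_le (As i) (iInf_le _ (hAs i))
    · exact le_iInf fun A => le_iInf fun hA => hle A hA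
  refine ⟨n, As, hAs, by rw [key, hMeq], ?_⟩
  rw [key]
  exact hfin M ⟨n, As, hAs, hMeq⟩
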